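/- Let γ denote the standard Gaussian measure N(0,1) on ℝ, let φ : ℝ → ℝ be of class C¹ with bounded derivative, and for t ∈ (0,1) define φ_t(x) = ∫_ℝ φ(√t·y + √(1−t)·x) dγ(y). Then φ_t is twice differentiable, for every x one has φ_t''(x) = ((1−t)/√t) ∫_ℝ y·φ'(√t·y + √(1−t)·x) dγ(y), and consequently sup_x |φ_t''(x)| ≤ √(2/π) · ((1−t)/√t) · sup_x|φ'(x)|. -/

import Mathlib

open MeasureTheory ProbabilityTheory Real Filter Set Topology

noncomputable def p (y : ℝ) : ℝ := (Real.sqrt (2 * Real.pi))⁻¹ * Real.exp (-(2⁻¹ * y ^ 2))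

lemma p_eq (y : ℝ) : gaussianPDFReal 0 1 y = p y := by
  simp [gaussianPDFReal, p]
  ring_nf
  tauto

lemma p_pos (y : ℝ) : 0 < p y := by
  unfold p
  positivity

lemma gauss_eq : (gaussianReal 0 1 : Measure ℝ)
    = (volume : Measure ℝ).withDensity (fun y => ((p y).toNNReal : ENNReal)) := by
  rw [gaussianReal_of_var_ne_zero 0 one_ne_zero]
  congr 1
  ext y
  simp only [gaussianPDF_def, p_eq, ENNReal.ofReal]

lemma p_meas : Measurable fun y => (p y).toNNReal := by
  apply Measurable.real_toNNReal
  unfold p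
  fun_prop

lemma integral_gauss (f : ℝ → ℝ) :
    ∫ y, f y ∂(gaussianReal 0 1) = ∫ y, f y * p y := by
  rw [gauss_eq, integral_withDensity_eq_integral_smul p_meas]
  congr 1; ext y
  simp [NNReal.smul_def, Real.coe_toNNReal _ (p_pos y).le, mul_comm]

lemma integrable_gauss_iff (f : ℝ → ℝ) :
    Integrable f (gaussianReal 0 1) ↔ Integrable (fun y => f y * p y) := by
  rw [gauss_eq, integrable_withDensity_iff (p_meas.coe_nnreal_ennreal) (by simp)]
  simp [Real.coe_toNNReal _ (p_pos _).le]

lemma integrable_p : Integrable p := by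
  unfold p
  simpa [neg_mul] using
    (integrable_exp_neg_mul_sq (by norm_num : (0:ℝ) < 2⁻¹)).const_mul (Real.sqrt (2*Real.pi))⁻¹

lemma integrable_abs_p : Integrable (fun y => |y| * p y) := by
  have h := ((integrable_mul_exp_neg_mul_sq (by norm_num : (0:ℝ) < 2⁻¹)).abs).const_mul
    (Real.sqrt (2*Real.pi))⁻¹
  refine h.congr (Eventually.of_forall fun y => ?_)
  simp only [p, abs_mul, abs_of_nonneg (Real.exp_pos _).le, neg_mul]
  ring

lemma integrable_sq_p : Integrable (fun y => y^2 * p y) := by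
  have h := (integrable_rpow_mul_exp_neg_mul_sq (by norm_num : (0:ℝ) < 2⁻¹)
    (by norm_num : (-1:ℝ) < 2)).const_mul (Real.sqrt (2*Real.pi))⁻¹
  refine h.congr (Eventually.of_forall fun y => ?_)
  have h2 : y ^ (2:ℝ) = y ^ 2 := by
    rw [show (2:ℝ) = ((2:ℕ):ℝ) by norm_num, Real.rpow_natCast]
  simp only [h2, p, neg_mul]
  ring

lemma integrable_quad_gauss (c1 c2 : ℝ) :
    Integrable (fun y => c1 + c2 * y^2) (gaussianReal 0 1) := by
  rw [integrable_gauss_iff]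
  have : (fun y => (c1 + c2*y^2) * p y) = fun y => c1 * p y + c2 * (y^2 * p y) := by
    ext y; ring
  rw [this]
  exact (integrable_p.const_mul c1).add ((integrable_sq_p).const_mul c2)

lemma integrable_gauss_of_le_quad {g : ℝ → ℝ}
    (hg : AEStronglyMeasurable g (gaussianReal 0 1)) {c1 c2 : ℝ}
    (h : ∀ y, |g y| ≤ c1 + c2 * y ^ 2) : Integrable g (gaussianReal 0 1) :=
  (integrable_quad_gauss c1 c2).mono' hg
    (Eventually.of_forall fun y => by simpa [Real.norm_eq_abs] using h y)

lemma integrable_abs_gauss : Integrable (fun y => |y|) (gaussianReal 0 1) := by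
  rw [integrable_gauss_iff]; exact integrable_abs_p

-- limits
lemma tendsto_e (l : Filter ℝ) (hl : Tendsto abs l atTop) :
    Tendsto (fun y : ℝ => Real.exp (-(2⁻¹ * y ^ 2))) l (𝓝 0) := by
  have h1 : Tendsto (fun y : ℝ => 2⁻¹ * y^2) l atTop := by
    have h2 : Tendsto (fun r : ℝ => 2⁻¹ * r^2) atTop atTop :=
      (tendsto_pow_atTop two_ne_zero).const_mul_atTop (by norm_num)
    have := h2.comp hl
    simpa [Function.comp_def, sq_abs] using this
  have h3 : Tendsto (fun y : ℝ => -(2⁻¹ * y ^ 2)) l atBot := tendsto_neg_atTop_atBot.comp h1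
  exact tendsto_exp_atBot.comp h3

lemma tendsto_abs_e (l : Filter ℝ) (hl : Tendsto abs l atTop) :
    Tendsto (fun y : ℝ => |y| * Real.exp (-(2⁻¹ * y ^ 2))) l (𝓝 0) := by
  have key : Tendsto (fun r : ℝ => r * Real.exp (-(2⁻¹ * r ^ 2))) atTop (𝓝 0) := by
    have hb : Tendsto (fun r : ℝ => r * Real.exp (-r)) atTop (𝓝 0) := by
      simpa using tendsto_pow_mul_exp_neg_atTop_nhds_zero 1
    refine squeeze_zero' ?_ ?_ hb
    · filter_upwards [eventually_ge_atTop (0:ℝ)] with r hr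
      positivity
    · filter_upwards [eventually_ge_atTop (2:ℝ)] with r hr
      have : r ≤ 2⁻¹ * r ^ 2 := by nlinarith
      have := Real.exp_le_exp.2 (neg_le_neg this)
      nlinarith [Real.exp_pos (-(2⁻¹ * r^2)), Real.exp_pos (-r)]
  have := key.comp hl
  simpa [Function.comp_def, sq_abs] using this

lemma p_cont : Continuous p := by unfold p; fun_prop

lemma tendsto_lin_p (c1 c2 : ℝ) (l : Filter ℝ) (hl : Tendsto abs l atTop) :
    Tendsto (fun y : ℝ => (c1 + c2 * |y|) * p y) l (𝓝 0) := by
  have h1 := (tendsto_e l hl).const_mul (c1 * (Real.sqrt (2*Real.pi))⁻¹)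
  have h2 := (tendsto_abs_e l hl).const_mul (c2 * (Real.sqrt (2*Real.pi))⁻¹)
  have h3 := h1.add h2
  simp only [mul_zero, add_zero] at h3
  refine Tendsto.congr (fun y => ?_) h3
  simp only [p]; ring

lemma hp' (y : ℝ) : HasDerivAt p (-y * p y) y := by
  have h1 : HasDerivAt (fun y : ℝ => -(2⁻¹ * y^2)) (-y) y := by
    have := ((hasDerivAt_pow 2 y).const_mul (2⁻¹ : ℝ)).neg
    refine this.congr_deriv ?_
    simp; try ring
  have h2 := (h1.exp).const_mul (Real.sqrt (2*Real.pi))⁻¹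
  refine h2.congr_deriv ?_
  simp only [p]; ring

lemma gaussian_ibp (g g' : ℝ → ℝ) (hg : ∀ y, HasDerivAt g (g' y) y)
    (hg'c : Continuous g') (D : ℝ) (hD : ∀ y, |g' y| ≤ D) :
    ∫ y, y * g y ∂(gaussianReal 0 1) = ∫ y, g' y ∂(gaussianReal 0 1) := by
  have hgd : Differentiable ℝ g := fun y => (hg y).differentiableAt
  have hgc : Continuous g := hgd.continuous
  have hD0 : 0 ≤ D := le_trans (abs_nonneg _) (hD 0)
  have hlip : LipschitzWith D.toNNReal g := by
    apply lipschitzWith_of_nnnorm_deriv_le hgd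
    intro y
    rw [(hg y).deriv, ← NNReal.coe_le_coe, coe_nnnorm, Real.norm_eq_abs,
      Real.coe_toNNReal D hD0]
    exact hD y
  have growth : ∀ y, |g y| ≤ |g 0| + D * |y| := by
    intro y
    have h1 := hlip.dist_le_mul y 0
    rw [Real.dist_eq, Real.dist_eq, sub_zero, Real.coe_toNNReal D hD0] at h1
    have h2 : |g y| - |g 0| ≤ |g y - g 0| := abs_sub_abs_le_abs_sub _ _
    linarith
  have hder : ∀ y : ℝ, HasDerivAt (fun y => g y * p y) (g' y * p y + g y * (-y * p y)) y :=
    fun y => (hg y).mul (hp' y)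
  have int1 : Integrable (fun y => g' y * p y) := by
    refine (integrable_p.const_mul D).mono' ((hg'c.mul p_cont).aestronglyMeasurable)
      (Eventually.of_forall fun y => ?_)
    rw [Real.norm_eq_abs, abs_mul, abs_of_nonneg (p_pos y).le]
    exact mul_le_mul_of_nonneg_right (hD y) (p_pos y).le
  have int2 : Integrable (fun y => g y * (-y * p y)) := by
    refine (((integrable_abs_p.const_mul |g 0|).add (integrable_sq_p.const_mul D)).mono'
      ((hgc.mul ((continuous_neg.mul p_cont))).aestronglyMeasurable)
      (Eventually.of_forall fun y => ?_))
    rw [Real.norm_eq_abs, abs_mul, abs_mul, abs_neg, abs_of_nonneg (p_pos y).le]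
    have h1 : |g y| * (|y| * p y) ≤ (|g 0| + D * |y|) * (|y| * p y) :=
      mul_le_mul_of_nonneg_right (growth y) (mul_nonneg (abs_nonneg y) (p_pos y).le)
    have h2 : |y| * |y| = y^2 := by rw [← abs_mul, abs_mul_self]; ring
    calc |g y| * (|y| * p y) ≤ (|g 0| + D * |y|) * (|y| * p y) := h1
    _ = |g 0| * (|y| * p y) + D * (|y| * |y| * p y) := by ring
    _ = |g 0| * (|y| * p y) + D * (y ^ 2 * p y) := by rw [h2]
  have htends : ∀ l : Filter ℝ, Tendsto abs l atTop →
      Tendsto (fun y => g y * p y) l (𝓝 0) := by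
    intro l hl
    refine squeeze_zero_norm (fun y => ?_) (tendsto_lin_p (|g 0|) D l hl)
    rw [Real.norm_eq_abs, abs_mul, abs_of_nonneg (p_pos y).le]
    exact mul_le_mul_of_nonneg_right (growth y) (p_pos y).le
  have hzero : ∫ y, (g' y * p y + g y * (-y * p y)) = 0 := by
    rw [integral_of_hasDerivAt_of_tendsto hder (int1.add int2)
      (htends _ tendsto_abs_atBot_atTop) (htends _ tendsto_abs_atTop_atTop)]
    simp
  rw [integral_add int1 int2] at hzero
  rw [integral_gauss, integral_gauss]
  have : (fun y => y * g y * p y) = fun y => -(g y * (-y * p y)) := by ext y; ring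
  rw [this, integral_neg]
  linarith [hzero]

lemma integrable_abs_e : Integrable (fun y : ℝ => |y| * Real.exp (-(2⁻¹ * y ^ 2))) := by
  have h := (integrable_mul_exp_neg_mul_sq (by norm_num : (0:ℝ) < 2⁻¹)).abs
  refine h.congr (Eventually.of_forall fun y => ?_)
  simp only [abs_mul, abs_of_nonneg (Real.exp_pos _).le, neg_mul]

lemma integral_abs_gauss : ∫ y, |y| ∂(gaussianReal 0 1) = Real.sqrt (2 / Real.pi) := by
  rw [integral_gauss]
  have hIoi : ∫ y in Ioi (0:ℝ), |y| * Real.exp (-(2⁻¹*y^2)) = 1 := by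
    have hder : ∀ y ∈ Ici (0:ℝ), HasDerivAt (fun y : ℝ => -Real.exp (-(2⁻¹*y^2)))
        (|y| * Real.exp (-(2⁻¹*y^2))) y := by
      intro y hy
      have h1 : HasDerivAt (fun y : ℝ => -(2⁻¹ * y^2)) (-y) y := by
        have := ((hasDerivAt_pow 2 y).const_mul (2⁻¹ : ℝ)).neg
        refine this.congr_deriv ?_
        simp; try ring
      have := h1.exp.neg
      refine this.congr_deriv ?_
      rw [abs_of_nonneg hy]; try ring
    have htop : Tendsto (fun y : ℝ => -Real.exp (-(2⁻¹*y^2))) atTop (𝓝 0) := by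
      simpa using (tendsto_e atTop tendsto_abs_atTop_atTop).neg
    have := integral_Ioi_of_hasDerivAt_of_tendsto' hder integrable_abs_e.integrableOn htop
    simpa using this
  have hIic : ∫ y in Iic (0:ℝ), |y| * Real.exp (-(2⁻¹*y^2)) = 1 := by
    have hder : ∀ y ∈ Iic (0:ℝ), HasDerivAt (fun y : ℝ => Real.exp (-(2⁻¹*y^2)))
        (|y| * Real.exp (-(2⁻¹*y^2))) y := by
      intro y hy
      have h1 : HasDerivAt (fun y : ℝ => -(2⁻¹ * y^2)) (-y) y := by
        have := ((hasDerivAt_pow 2 y).const_mul (2⁻¹ : ℝ)).neg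
        refine this.congr_deriv ?_
        simp; try ring
      refine h1.exp.congr_deriv ?_
      rw [abs_of_nonpos hy]; try ring
    have hbot : Tendsto (fun y : ℝ => Real.exp (-(2⁻¹*y^2))) atBot (𝓝 0) :=
      tendsto_e atBot tendsto_abs_atBot_atTop
    have := integral_Iic_of_hasDerivAt_of_tendsto' hder integrable_abs_e.integrableOn hbot
    simpa using this
  have htot : ∫ y : ℝ, |y| * Real.exp (-(2⁻¹*y^2)) = 2 := by
    rw [← intervalIntegral.integral_Iic_add_Ioi integrable_abs_e.integrableOn integrable_abs_e.integrableOn,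
      hIic, hIoi]
    norm_num
  have hsplit : (fun y : ℝ => |y| * p y)
      = fun y => (Real.sqrt (2*Real.pi))⁻¹ * (|y| * Real.exp (-(2⁻¹*y^2))) := by
    ext y; simp only [p]; ring
  rw [hsplit, MeasureTheory.integral_const_mul, htot]
  have hπ : (0:ℝ) < Real.pi := Real.pi_pos
  have h2 : Real.sqrt (2*Real.pi) = Real.sqrt 2 * Real.sqrt Real.pi :=
    Real.sqrt_mul (by norm_num) _
  have h3 : Real.sqrt (2/Real.pi) = Real.sqrt 2 / Real.sqrt Real.pi :=
    Real.sqrt_div (by norm_num) _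
  have hs2 : Real.sqrt 2 * Real.sqrt 2 = 2 := Real.mul_self_sqrt (by norm_num)
  have hsπ : (0:ℝ) < Real.sqrt Real.pi := Real.sqrt_pos.2 hπ
  have hs2' : (0:ℝ) < Real.sqrt 2 := Real.sqrt_pos.2 (by norm_num)
  rw [h2, h3]
  field_simp
  nlinarith [hs2]

theorem second_deriv_gaussian_smoothing
    (φ : ℝ → ℝ) (hφ : ContDiff ℝ 1 φ) (hφ' : ∃ C : ℝ, ∀ x, |deriv φ x| ≤ C)
    (t : ℝ) (ht : t ∈ Set.Ioo (0 : ℝ) 1)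
    (φt : ℝ → ℝ)
    (hφt : φt = fun x => ∫ y, φ (Real.sqrt t * y + Real.sqrt (1 - t) * x)
      ∂(gaussianReal 0 1)) :
    (∀ x, DifferentiableAt ℝ φt x) ∧ (∀ x, DifferentiableAt ℝ (deriv φt) x) ∧
    (∀ x, deriv (deriv φt) x
        = ((1 - t) / Real.sqrt t) *
            ∫ y, y * deriv φ (Real.sqrt t * y + Real.sqrt (1 - t) * x)
              ∂(gaussianReal 0 1)) ∧
    (∀ x, |deriv (deriv φt) x|
        ≤ Real.sqrt (2 / Real.pi) * ((1 - t) / Real.sqrt t) * ⨆ y, |deriv φ y|) := by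
  obtain ⟨ht0, ht1⟩ := ht
  obtain ⟨C0, hC0⟩ := hφ'
  set C := max C0 0 with hCdef
  have hC : ∀ x, |deriv φ x| ≤ C := fun x => (hC0 x).trans (le_max_left _ _)
  have hCnn : 0 ≤ C := le_max_right _ _
  set a := Real.sqrt t with ha
  set b := Real.sqrt (1 - t) with hb
  have hapos : 0 < a := Real.sqrt_pos.2 ht0
  have hbpos : 0 < b := Real.sqrt_pos.2 (by linarith)
  have ha2 : a^2 = t := Real.sq_sqrt ht0.le
  have hb2 : b^2 = 1 - t := Real.sq_sqrt (by linarith)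
  have hφd : Differentiable ℝ φ := hφ.differentiable one_ne_zero
  have hφ'c : Continuous (deriv φ) := hφ.continuous_deriv le_rfl
  have hφc : Continuous φ := hφ.continuous
  -- growth of φ
  have hlipφ : LipschitzWith C.toNNReal φ := by
    apply lipschitzWith_of_nnnorm_deriv_le hφd
    intro y
    rw [← NNReal.coe_le_coe, coe_nnnorm, Real.norm_eq_abs, Real.coe_toNNReal C hCnn]
    exact hC y
  have growth : ∀ z, |φ z| ≤ |φ 0| + C * |z| := by
    intro z
    have h1 := hlipφ.dist_le_mul z 0
    rw [Real.dist_eq, Real.dist_eq, sub_zero, Real.coe_toNNReal C hCnn] at h1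
    have h2 : |φ z| - |φ 0| ≤ |φ z - φ 0| := abs_sub_abs_le_abs_sub _ _
    linarith
  -- derivative of affine compositions
  have haffx : ∀ (y x : ℝ), HasDerivAt (fun x => φ (a*y + b*x)) (deriv φ (a*y+b*x) * b) x := by
    intro y x
    have h1 : HasDerivAt (fun x : ℝ => a*y + b*x) b x := by
      simpa using ((hasDerivAt_id x).const_mul b).const_add (a*y)
    exact ((hφd _).hasDerivAt).comp x h1
  have haffy : ∀ (x y : ℝ), HasDerivAt (fun y => φ (a*y + b*x)) (deriv φ (a*y+b*x) * a) y := by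
    intro x y
    have h1 : HasDerivAt (fun y : ℝ => a*y + b*x) a y := by
      simpa using ((hasDerivAt_id y).const_mul a).add_const (b*x)
    exact ((hφd _).hasDerivAt).comp y h1
  -- integrability facts
  have int_phi : ∀ x : ℝ, Integrable (fun y => φ (a*y + b*x)) (gaussianReal 0 1) := by
    intro x
    refine integrable_gauss_of_le_quad
      ((hφc.comp (by fun_prop)).aestronglyMeasurable)
      (c1 := |φ 0| + C*b*|x| + C*a) (c2 := C*a) (fun y => ?_)
    have h1 := growth (a*y + b*x)
    have h2 : |a*y + b*x| ≤ a * |y| + b * |x| := by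
      calc |a*y + b*x| ≤ |a*y| + |b*x| := abs_add_le _ _
      _ = a * |y| + b * |x| := by
        rw [abs_mul, abs_mul, abs_of_nonneg hapos.le, abs_of_nonneg hbpos.le]
    have h3 : |y| ≤ 1 + y^2 := by nlinarith [sq_nonneg (|y| - 1), sq_abs y]
    have h4 := mul_le_mul_of_nonneg_left h2 hCnn
    have h5 := mul_le_mul_of_nonneg_left h3 (mul_nonneg hCnn hapos.le)
    nlinarith
  have int_yphi : ∀ x : ℝ, Integrable (fun y => y * φ (a*y + b*x)) (gaussianReal 0 1) := by
    intro x
    refine integrable_gauss_of_le_quad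
      ((continuous_id.mul (hφc.comp (by fun_prop))).aestronglyMeasurable)
      (c1 := |φ 0| + C*b*|x|) (c2 := |φ 0| + C*b*|x| + C*a) (fun y => ?_)
    have h1 := growth (a*y + b*x)
    have h2 : |a*y + b*x| ≤ a * |y| + b * |x| := by
      calc |a*y + b*x| ≤ |a*y| + |b*x| := abs_add_le _ _
      _ = a * |y| + b * |x| := by
        rw [abs_mul, abs_mul, abs_of_nonneg hapos.le, abs_of_nonneg hbpos.le]
    have h3 : |y| * |y| = y^2 := by rw [← abs_mul, abs_mul_self]; ring
    have h4 : |y| ≤ 1 + y^2 := by nlinarith [sq_nonneg (|y| - 1), sq_abs y]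
    rw [abs_mul]
    have h5 : |y| * |φ (a*y+b*x)| ≤ |y| * (|φ 0| + C * (a * |y| + b * |x|)) := by
      apply mul_le_mul_of_nonneg_left _ (abs_nonneg y)
      exact h1.trans (by nlinarith [mul_le_mul_of_nonneg_left h2 hCnn])
    have h6 : (0:ℝ) ≤ |φ 0| + C*b*|x| := by positivity
    have h7 : |y| * (|φ 0| + C * (a*|y| + b*|x|))
        = (|φ 0| + C*b*|x|) * |y| + C*a*(|y| * |y|) := by ring
    rw [h3] at h7
    have h8 : (|φ 0| + C*b*|x|) * |y| ≤ (|φ 0| + C*b*|x|) * (1 + y^2) :=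
      mul_le_mul_of_nonneg_left h4 h6
    nlinarith [mul_nonneg (mul_nonneg hCnn hapos.le) (sq_nonneg y)]
  have int_yderiv : ∀ x : ℝ, Integrable (fun y => y * deriv φ (a*y + b*x)) (gaussianReal 0 1) := by
    intro x
    refine integrable_gauss_of_le_quad
      ((continuous_id.mul (hφ'c.comp (by fun_prop))).aestronglyMeasurable)
      (c1 := C) (c2 := C) (fun y => ?_)
    have h4 : |y| ≤ 1 + y^2 := by nlinarith [sq_nonneg (|y| - 1), sq_abs y]
    rw [abs_mul]
    have h5 : |y| * |deriv φ (a*y+b*x)| ≤ |y| * C :=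
      mul_le_mul_of_nonneg_left (hC _) (abs_nonneg y)
    nlinarith
  -- gaussian IBP at each x
  have key2 : ∀ x : ℝ, ∫ y, y * φ (a*y+b*x) ∂(gaussianReal 0 1)
      = ∫ y, deriv φ (a*y+b*x) * a ∂(gaussianReal 0 1) := by
    intro x
    refine gaussian_ibp _ _ (haffy x) ((hφ'c.comp (by fun_prop)).mul continuous_const)
      (C*a) (fun y => ?_)
    rw [abs_mul, abs_of_nonneg hapos.le]
    exact mul_le_mul_of_nonneg_right (hC _) hapos.le
  -- first derivative
  have key1 : ∀ x₀ : ℝ, HasDerivAt φt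
      ((b/a) * ∫ y, y * φ (a*y+b*x₀) ∂(gaussianReal 0 1)) x₀ := by
    intro x₀
    have step := (hasDerivAt_integral_of_dominated_loc_of_lip (μ := gaussianReal 0 1)
      (F := fun x y => φ (a*y + b*x)) (F' := fun y => deriv φ (a*y+b*x₀) * b) (x₀ := x₀)
      (bound := fun _ => C * b) (s := Metric.ball x₀ 1) (Metric.ball_mem_nhds x₀ one_pos)
      (Eventually.of_forall fun x => (hφc.comp (by fun_prop)).aestronglyMeasurable)
      (int_phi x₀)
      (((hφ'c.comp (by fun_prop)).mul continuous_const).aestronglyMeasurable)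
      (Eventually.of_forall fun y => ?_)
      (integrable_const _)
      (Eventually.of_forall fun y => haffx y x₀)).2
    · rw [hφt]
      refine step.congr_deriv ?_
      rw [key2 x₀, MeasureTheory.integral_mul_const, MeasureTheory.integral_mul_const]
      field_simp
    · apply LipschitzWith.lipschitzOnWith
      apply lipschitzWith_of_nnnorm_deriv_le (fun x => (haffx y x).differentiableAt)
      intro x
      rw [(haffx y x).deriv, ← NNReal.coe_le_coe, coe_nnnorm, Real.norm_eq_abs,
        Real.coe_nnabs, abs_of_nonneg (mul_nonneg hCnn hbpos.le), abs_mul,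
        abs_of_nonneg hbpos.le]
      exact mul_le_mul_of_nonneg_right (hC _) hbpos.le
  have hderiv_φt : deriv φt
      = fun x => (b/a) * ∫ y, y * φ (a*y+b*x) ∂(gaussianReal 0 1) :=
    funext fun x => (key1 x).deriv
  -- second derivative
  have key3 : ∀ x₀ : ℝ, HasDerivAt (fun x => ∫ y, y * φ (a*y+b*x) ∂(gaussianReal 0 1))
      (∫ y, y * (deriv φ (a*y+b*x₀) * b) ∂(gaussianReal 0 1)) x₀ := by
    intro x₀
    refine (hasDerivAt_integral_of_dominated_loc_of_lip (μ := gaussianReal 0 1)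
      (F := fun x y => y * φ (a*y + b*x)) (F' := fun y => y * (deriv φ (a*y+b*x₀) * b))
      (x₀ := x₀) (bound := fun y => C * b * |y|) (s := Metric.ball x₀ 1) (Metric.ball_mem_nhds x₀ one_pos)
      (Eventually.of_forall fun x =>
        (continuous_id.mul (hφc.comp (by fun_prop))).aestronglyMeasurable)
      (int_yphi x₀)
      ((continuous_id.mul ((hφ'c.comp (by fun_prop)).mul continuous_const)).aestronglyMeasurable)
      (Eventually.of_forall fun y => ?_)
      ((integrable_abs_gauss.const_mul (C*b)))
      (Eventually.of_forall fun y => (haffx y x₀).const_mul y)).2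
    apply LipschitzWith.lipschitzOnWith
    apply lipschitzWith_of_nnnorm_deriv_le
      (fun x => ((haffx y x).const_mul y).differentiableAt)
    intro x
    rw [((haffx y x).const_mul y).deriv, ← NNReal.coe_le_coe, coe_nnnorm, Real.norm_eq_abs,
      Real.coe_nnabs, abs_of_nonneg (by positivity : (0:ℝ) ≤ C * b * |y|), abs_mul, abs_mul,
      abs_of_nonneg hbpos.le]
    have := mul_le_mul_of_nonneg_right (hC (a*y+b*x)) hbpos.le
    calc |y| * (|deriv φ (a*y+b*x)| * b) ≤ |y| * (C * b) :=
      mul_le_mul_of_nonneg_left this (abs_nonneg y)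
    _ = C * b * |y| := by ring
  have key4 : ∀ x₀ : ℝ, HasDerivAt (deriv φt)
      (((1-t)/a) * ∫ y, y * deriv φ (a*y+b*x₀) ∂(gaussianReal 0 1)) x₀ := by
    intro x₀
    rw [hderiv_φt]
    have h1 := HasDerivAt.const_mul (b/a) (key3 x₀)
    refine h1.congr_deriv ?_
    have heq : (fun y => y * (deriv φ (a*y+b*x₀) * b))
        = fun y => (y * deriv φ (a*y+b*x₀)) * b := by ext y; ring
    rw [heq, MeasureTheory.integral_mul_const]
    have hbb : b * b = 1 - t := by nlinarith [hb2]
    rw [← hbb]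
    ring
  have hderiv2 : ∀ x : ℝ, deriv (deriv φt) x
      = ((1-t)/a) * ∫ y, y * deriv φ (a*y+b*x) ∂(gaussianReal 0 1) :=
    fun x => (key4 x).deriv
  refine ⟨fun x => (key1 x).differentiableAt, fun x => (key4 x).differentiableAt,
    hderiv2, fun x => ?_⟩
  -- the bound
  set S := ⨆ y, |deriv φ y| with hSdef
  have hBdd : BddAbove (Set.range fun y => |deriv φ y|) :=
    ⟨C, by rintro z ⟨y, rfl⟩; exact hC y⟩
  have hS : ∀ z, |deriv φ z| ≤ S := fun z => le_ciSup hBdd z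
  have hS0 : (0:ℝ) ≤ S := (abs_nonneg _).trans (hS 0)
  rw [hderiv2 x, abs_mul, abs_of_nonneg (div_nonneg (by linarith) hapos.le)]
  have hI1 := norm_integral_le_integral_norm (μ := gaussianReal 0 1)
    (f := fun y => y * deriv φ (a*y+b*x))
  simp only [Real.norm_eq_abs] at hI1
  have hI2 : ∫ y, |y * deriv φ (a*y+b*x)| ∂(gaussianReal 0 1)
      ≤ ∫ y, S * |y| ∂(gaussianReal 0 1) := by
    refine integral_mono (int_yderiv x).abs (integrable_abs_gauss.const_mul S) (fun y => ?_)
    rw [abs_mul]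
    calc |y| * |deriv φ (a*y+b*x)| ≤ |y| * S :=
      mul_le_mul_of_nonneg_left (hS _) (abs_nonneg y)
    _ = S * |y| := by ring
  have hI3 : ∫ y, S * |y| ∂(gaussianReal 0 1) = S * Real.sqrt (2/Real.pi) := by
    rw [MeasureTheory.integral_const_mul, integral_abs_gauss]
  have := (hI1.trans hI2).trans_eq hI3
  calc (1-t)/a * |∫ y, y * deriv φ (a*y+b*x) ∂(gaussianReal 0 1)|
      ≤ (1-t)/a * (S * Real.sqrt (2/Real.pi)) :=
        mul_le_mul_of_nonneg_left this (div_nonneg (by linarith) hapos.le)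
  _ = Real.sqrt (2/Real.pi) * ((1-t)/a) * S := by ring
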